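/- Let ℓ ≥ 1 be a natural number, let n = (2ℓ+1)³, let c = (ℓ+1, ℓ+1, ℓ+1) be the centre point of the lattice cube L_ℓ, and let Q(ℓ) = (∏_{{x,y}} |x − y|)^{2/n²}, where the product runs over all unordered pairs of distinct points of L_ℓ. Then Q(ℓ) ≥ (∏_{x ∈ L_ℓ, x ≠ c} |c − x|)^{1/n}. -/

import Mathlib

open Finset

/-- The point of `ℝ³` (with the Euclidean metric) corresponding to an integer triple. -/
noncomputable def pt (i : ℤ × ℤ × ℤ) : EuclideanSpace ℝ (Fin 3) :=
  (WithLp.equiv 2 (Fin 3 → ℝ)).symm ![(i.1 : ℝ), (i.2.1 : ℝ), (i.2.2 : ℝ)]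

/-- The lattice cube `L_ℓ`: integer triples `(i₁,i₂,i₃)` with `1 ≤ i₁,i₂,i₃ ≤ 2ℓ+1`. -/
noncomputable def latticeCube (ℓ : ℕ) : Finset (ℤ × ℤ × ℤ) :=
  Finset.Icc 1 (2 * (ℓ : ℤ) + 1) ×ˢ Finset.Icc 1 (2 * (ℓ : ℤ) + 1) ×ˢ
    Finset.Icc 1 (2 * (ℓ : ℤ) + 1)

def shiftZ (m d t : ℤ) : ℤ := if m < t + d then t + d - m else if t + d < 1 then t + d + m else t + d

lemma shiftZ_mem {m d t : ℤ} (hd : -m < d) (hd2 : d < m) (ht : 1 ≤ t) (ht2 : t ≤ m) :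
    1 ≤ shiftZ m d t ∧ shiftZ m d t ≤ m := by unfold shiftZ; split_ifs <;> omega

lemma shiftZ_inv {m d t : ℤ} (hd : -m < d) (hd2 : d < m) (ht : 1 ≤ t) (ht2 : t ≤ m) :
    shiftZ m (-d) (shiftZ m d t) = t := by unfold shiftZ; split_ifs <;> omega

lemma shiftZ_abs {ℓ : ℕ} {d t : ℤ} (hd : -ℓ ≤ d) (hd2 : d ≤ ℓ) (ht : 1 ≤ t) (ht2 : t ≤ 2*ℓ+1) :
    (t - ((ℓ:ℤ)+1)).natAbs ≤ (shiftZ (2*ℓ+1) d t - (((ℓ:ℤ)+1)+d)).natAbs := by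
  unfold shiftZ; split_ifs <;> omega

lemma sq_cast_le {a b : ℤ} (h : a.natAbs ≤ b.natAbs) : (a:ℝ)^2 ≤ (b:ℝ)^2 := by
  have : (a^2 : ℤ) ≤ b^2 := by
    rw [← Int.natAbs_pow_two a, ← Int.natAbs_pow_two b]
    exact_mod_cast Nat.pow_le_pow_left h 2
  exact_mod_cast this

lemma dist_pt (x y : ℤ×ℤ×ℤ) : dist (pt x) (pt y)
    = Real.sqrt (((x.1-y.1:ℤ):ℝ)^2 + ((x.2.1-y.2.1:ℤ):ℝ)^2 + ((x.2.2-y.2.2:ℤ):ℝ)^2) := by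
  rw [EuclideanSpace.dist_eq, Fin.sum_univ_three]
  simp [pt, Real.dist_eq, sq_abs]

lemma pt_inj : Function.Injective pt := by
  intro x y h
  have h0 := congrFun (congrArg (WithLp.equiv 2 (Fin 3 → ℝ)) h)
  have h1 := h0 0
  have h2 := h0 1
  have h3 := h0 2
  simp [pt] at h1 h2 h3
  exact Prod.ext (by exact_mod_cast h1) (Prod.ext (by exact_mod_cast h2) (by exact_mod_cast h3))

lemma mem_latticeCube {ℓ : ℕ} {x : ℤ×ℤ×ℤ} : x ∈ latticeCube ℓ ↔
    (1 ≤ x.1 ∧ x.1 ≤ 2*(ℓ:ℤ)+1) ∧ (1 ≤ x.2.1 ∧ x.2.1 ≤ 2*(ℓ:ℤ)+1) ∧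
    (1 ≤ x.2.2 ∧ x.2.2 ≤ 2*(ℓ:ℤ)+1) := by
  simp [latticeCube, Finset.mem_product, Finset.mem_Icc, and_assoc]

lemma P_min (ℓ : ℕ) (c x : ℤ×ℤ×ℤ) (hc : c = ((ℓ:ℤ)+1, (ℓ:ℤ)+1, (ℓ:ℤ)+1))
    (hx : x ∈ latticeCube ℓ) :
    ∏ y ∈ (latticeCube ℓ).erase c, dist (pt c) (pt y)
      ≤ ∏ z ∈ (latticeCube ℓ).erase x, dist (pt x) (pt z) := by
  obtain ⟨hx1, hx2, hx3⟩ := mem_latticeCube.1 hx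
  set d1 := x.1 - ((ℓ:ℤ)+1) with hd1
  set d2 := x.2.1 - ((ℓ:ℤ)+1) with hd2
  set d3 := x.2.2 - ((ℓ:ℤ)+1) with hd3
  have hb1 : -(ℓ:ℤ) ≤ d1 ∧ d1 ≤ ℓ := by omega
  have hb2 : -(ℓ:ℤ) ≤ d2 ∧ d2 ≤ ℓ := by omega
  have hb3 : -(ℓ:ℤ) ≤ d3 ∧ d3 ≤ ℓ := by omega
  set φ : ℤ×ℤ×ℤ → ℤ×ℤ×ℤ := fun y => (shiftZ (2*(ℓ:ℤ)+1) d1 y.1, shiftZ (2*(ℓ:ℤ)+1) d2 y.2.1, shiftZ (2*(ℓ:ℤ)+1) d3 y.2.2) with hφ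
  set ψ : ℤ×ℤ×ℤ → ℤ×ℤ×ℤ := fun y => (shiftZ (2*(ℓ:ℤ)+1) (-d1) y.1, shiftZ (2*(ℓ:ℤ)+1) (-d2) y.2.1, shiftZ (2*(ℓ:ℤ)+1) (-d3) y.2.2) with hψ
  have hφc : φ c = x := by
    simp only [hφ, hc]
    refine Prod.ext ?_ (Prod.ext ?_ ?_) <;> · unfold shiftZ; simp only [Prod.fst, Prod.snd]; split_ifs <;> omega
  have hψφ : ∀ y ∈ latticeCube ℓ, ψ (φ y) = y := by
    intro y hy
    obtain ⟨h1, h2, h3⟩ := mem_latticeCube.1 hy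
    simp only [hφ, hψ]
    exact Prod.ext (shiftZ_inv (by omega) (by omega) h1.1 h1.2)
      (Prod.ext (shiftZ_inv (by omega) (by omega) h2.1 h2.2)
        (shiftZ_inv (by omega) (by omega) h3.1 h3.2))
  have hφψ : ∀ y ∈ latticeCube ℓ, φ (ψ y) = y := by
    intro y hy
    obtain ⟨h1, h2, h3⟩ := mem_latticeCube.1 hy
    simp only [hφ, hψ]
    refine Prod.ext ?_ (Prod.ext ?_ ?_)
    · have := shiftZ_inv (d := -d1) (m := 2*(ℓ:ℤ)+1) (t := y.1) (by omega) (by omega) h1.1 h1.2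
      rwa [neg_neg] at this
    · have := shiftZ_inv (d := -d2) (m := 2*(ℓ:ℤ)+1) (t := y.2.1) (by omega) (by omega) h2.1 h2.2
      rwa [neg_neg] at this
    · have := shiftZ_inv (d := -d3) (m := 2*(ℓ:ℤ)+1) (t := y.2.2) (by omega) (by omega) h3.1 h3.2
      rwa [neg_neg] at this
  have hφmem : ∀ y ∈ latticeCube ℓ, φ y ∈ latticeCube ℓ := by
    intro y hy
    obtain ⟨h1, h2, h3⟩ := mem_latticeCube.1 hy
    exact mem_latticeCube.2 ⟨shiftZ_mem (by omega) (by omega) h1.1 h1.2,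
      shiftZ_mem (by omega) (by omega) h2.1 h2.2, shiftZ_mem (by omega) (by omega) h3.1 h3.2⟩
  have hψmem : ∀ y ∈ latticeCube ℓ, ψ y ∈ latticeCube ℓ := by
    intro y hy
    obtain ⟨h1, h2, h3⟩ := mem_latticeCube.1 hy
    exact mem_latticeCube.2 ⟨shiftZ_mem (by omega) (by omega) h1.1 h1.2,
      shiftZ_mem (by omega) (by omega) h2.1 h2.2, shiftZ_mem (by omega) (by omega) h3.1 h3.2⟩
  have hc_mem : c ∈ latticeCube ℓ := by rw [mem_latticeCube, hc]; simp; omega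
  have key : ∀ y ∈ latticeCube ℓ, dist (pt c) (pt y) ≤ dist (pt x) (pt (φ y)) := by
    intro y hy
    obtain ⟨h1, h2, h3⟩ := mem_latticeCube.1 hy
    rw [dist_pt, dist_pt]
    apply Real.sqrt_le_sqrt
    have e1 : ((c.1 - y.1 : ℤ):ℝ)^2 ≤ ((x.1 - (φ y).1 : ℤ):ℝ)^2 := by
      apply sq_cast_le
      have := shiftZ_abs hb1.1 hb1.2 h1.1 h1.2
      simp only [hc, hφ, Prod.fst, Prod.snd]
      omega
    have e2 : ((c.2.1 - y.2.1 : ℤ):ℝ)^2 ≤ ((x.2.1 - (φ y).2.1 : ℤ):ℝ)^2 := by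
      apply sq_cast_le
      have := shiftZ_abs hb2.1 hb2.2 h2.1 h2.2
      simp only [hc, hφ, Prod.fst, Prod.snd]
      omega
    have e3 : ((c.2.2 - y.2.2 : ℤ):ℝ)^2 ≤ ((x.2.2 - (φ y).2.2 : ℤ):ℝ)^2 := by
      apply sq_cast_le
      have := shiftZ_abs hb3.1 hb3.2 h3.1 h3.2
      simp only [hc, hφ, Prod.fst, Prod.snd]
      omega
    linarith
  calc ∏ y ∈ (latticeCube ℓ).erase c, dist (pt c) (pt y)
      ≤ ∏ y ∈ (latticeCube ℓ).erase c, dist (pt x) (pt (φ y)) :=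
        Finset.prod_le_prod (fun _ _ => dist_nonneg)
          (fun y hy => key y (Finset.mem_of_mem_erase hy))
    _ = ∏ z ∈ (latticeCube ℓ).erase x, dist (pt x) (pt z) := by
        refine Finset.prod_nbij' φ ψ ?_ ?_ ?_ ?_ ?_
        · intro y hy
          rw [Finset.mem_erase] at hy ⊢
          refine ⟨fun h => hy.1 ?_, hφmem y hy.2⟩
          have := hψφ y hy.2
          rw [h] at this
          rw [← this, ← hφc, hψφ c hc_mem]
        · intro z hz
          rw [Finset.mem_erase] at hz ⊢
          refine ⟨fun h => hz.1 ?_, hψmem z hz.2⟩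
          rw [← hφψ z hz.2, h, hφc]
        · intro y hy; exact hψφ y (Finset.mem_of_mem_erase hy)
        · intro z hz; exact hφψ z (Finset.mem_of_mem_erase hz)
        · intro y hy; rfl

lemma sq_prod_sym2 {α} [DecidableEq α] (s : Finset α) (f : α → α → ℝ)
    (hf : ∀ a b, f a b = f b a) :
    (∏ p ∈ s.sym2.filter (fun p => ¬ p.IsDiag), Sym2.lift ⟨f, hf⟩ p) ^ 2
      = ∏ z ∈ s.offDiag, f z.1 z.2 := by
  rw [← Finset.prod_fiberwise_of_maps_to (g := fun z : α × α => Sym2.mk z.1 z.2)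
    (fun z hz => ?_) (fun z => f z.1 z.2)]
  · rw [← Finset.prod_pow]
    refine Finset.prod_congr rfl fun p hp => ?_
    induction p using Sym2.ind with
    | _ a b =>
      simp only [Finset.mem_filter, Finset.mk_mem_sym2_iff, Sym2.isDiag_iff_proj_eq] at hp
      obtain ⟨⟨ha, hb⟩, hab⟩ := hp
      have key : s.offDiag.filter (fun z : α × α => Sym2.mk z.1 z.2 = s(a, b)) = {(a, b), (b, a)} := by
        ext ⟨z1, z2⟩
        simp only [Finset.mem_filter, Finset.mem_offDiag, Finset.mem_insert,
          Finset.mem_singleton, Sym2.eq_iff, Prod.mk.injEq]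
        constructor
        · rintro ⟨-, (⟨h1, h2⟩ | ⟨h1, h2⟩)⟩
          · exact Or.inl ⟨h1, h2⟩
          · exact Or.inr ⟨h1, h2⟩
        · rintro (⟨h1, h2⟩ | ⟨h1, h2⟩) <;> subst h1 <;> subst h2
          · exact ⟨⟨ha, hb, hab⟩, Or.inl ⟨rfl, rfl⟩⟩
          · exact ⟨⟨hb, ha, Ne.symm hab⟩, Or.inr ⟨rfl, rfl⟩⟩
      rw [key, Finset.prod_pair (by simp [Prod.ext_iff]; exact fun h => (hab h).elim)]
      simp [sq, hf b a]
  · obtain ⟨z1, z2⟩ := z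
    simp only [Finset.mem_offDiag] at hz
    simp only [Finset.mem_filter, Finset.mk_mem_sym2_iff, Sym2.isDiag_iff_proj_eq]
    exact ⟨⟨hz.1, hz.2.1⟩, hz.2.2⟩

lemma prod_offDiag_eq {α} [DecidableEq α] (s : Finset α) (f : α → α → ℝ) :
    ∏ z ∈ s.offDiag, f z.1 z.2 = ∏ x ∈ s, ∏ y ∈ s.erase x, f x y := by
  rw [Finset.prod_sigma']
  refine Finset.prod_nbij' (fun z => ⟨z.1, z.2⟩) (fun p => (p.1, p.2)) ?_ ?_ ?_ ?_ ?_
  · rintro ⟨x, y⟩ hz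
    simp only [Finset.mem_offDiag] at hz
    simp only [Finset.mem_sigma, Finset.mem_erase]
    exact ⟨hz.1, Ne.symm hz.2.2, hz.2.1⟩
  · rintro ⟨x, y⟩ hp
    simp only [Finset.mem_sigma, Finset.mem_erase] at hp
    simp only [Finset.mem_offDiag]
    exact ⟨hp.1, hp.2.2, Ne.symm hp.2.1⟩
  · rintro ⟨x, y⟩ _; rfl
  · rintro ⟨x, y⟩ _; rfl
  · rintro ⟨x, y⟩ _; rfl

lemma card_latticeCube (ℓ : ℕ) : (latticeCube ℓ).card = (2 * ℓ + 1) ^ 3 := by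
  have h : (Finset.Icc (1:ℤ) (2*(ℓ:ℤ)+1)).card = 2 * ℓ + 1 := by
    rw [Int.card_Icc]
    omega
  simp [latticeCube, Finset.card_product, h]
  ring

/-- The product of the Euclidean distances `|x − y|` over all unordered pairs `{x, y}` of
distinct points of the lattice cube `L_ℓ`. -/
noncomputable def pairProd (ℓ : ℕ) : ℝ :=
  ∏ p ∈ (latticeCube ℓ).sym2.filter (fun p => ¬ p.IsDiag),
    Sym2.lift ⟨fun x y => dist (pt x) (pt y), fun _ _ => dist_comm _ _⟩ p

/-- `Q(ℓ)`: the `2/n²`-th power of the product of distances over all unordered pairs of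
distinct points of `L_ℓ`, where `n = (2ℓ+1)³`. -/
noncomputable def Q (ℓ : ℕ) : ℝ :=
  pairProd ℓ ^ ((2 : ℝ) / (((2 * ℓ + 1) ^ 3 : ℕ) : ℝ) ^ 2)

theorem Q_ge_centre_product_rpow (ℓ : ℕ) (hℓ : 1 ≤ ℓ)
    (c : ℤ × ℤ × ℤ) (hc : c = ((ℓ : ℤ) + 1, (ℓ : ℤ) + 1, (ℓ : ℤ) + 1)) :
    Q ℓ ≥ (∏ x ∈ (latticeCube ℓ).erase c, dist (pt c) (pt x)) ^
      ((1 : ℝ) / (((2 * ℓ + 1) ^ 3 : ℕ) : ℝ)) := by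
  set N : ℕ := (2 * ℓ + 1) ^ 3 with hN
  set A : ℝ := ∏ x ∈ (latticeCube ℓ).erase c, dist (pt c) (pt x) with hA
  have hApos : 0 < A := by
    refine Finset.prod_pos fun y hy => ?_
    rw [dist_pos]
    exact fun h => (Finset.mem_erase.1 hy).1 (pt_inj h).symm
  have hPnonneg : 0 ≤ pairProd ℓ := by
    refine Finset.prod_nonneg fun p _ => ?_
    induction p using Sym2.ind with
    | _ a b => simpa using dist_nonneg
  have hsq : pairProd ℓ ^ 2 = ∏ x ∈ latticeCube ℓ, ∏ y ∈ (latticeCube ℓ).erase x,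
      dist (pt x) (pt y) := by
    rw [pairProd, sq_prod_sym2, prod_offDiag_eq (latticeCube ℓ) (fun a b => dist (pt a) (pt b))]
  have hAN : A ^ N ≤ pairProd ℓ ^ 2 := by
    rw [hsq, hN, ← card_latticeCube ℓ, ← Finset.prod_const]
    exact Finset.prod_le_prod (fun _ _ => hApos.le) (fun x hx => P_min ℓ c x hc hx)
  have hNpos : (0:ℝ) < (N:ℝ) := by positivity
  have h1 : (A ^ (N:ℝ)) ^ ((1:ℝ)/(N:ℝ)^2) = A ^ ((1:ℝ)/(N:ℝ)) := by
    rw [← Real.rpow_mul hApos.le]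
    congr 1
    field_simp
  have key : A ^ ((1:ℝ)/(N:ℝ)) ≤ Q ℓ := by
    calc A ^ ((1:ℝ)/(N:ℝ)) = (A ^ (N:ℝ)) ^ ((1:ℝ)/(N:ℝ)^2) := h1.symm
      _ ≤ ((pairProd ℓ) ^ (2:ℝ)) ^ ((1:ℝ)/(N:ℝ)^2) := by
          refine Real.rpow_le_rpow (Real.rpow_nonneg hApos.le _) ?_ (by positivity)
          rw [Real.rpow_natCast, Real.rpow_two]
          exact hAN
      _ = Q ℓ := by
          rw [(Real.rpow_mul hPnonneg 2 ((1:ℝ)/(N:ℝ)^2)).symm, Q]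
          congr 1
          rw [mul_one_div]
  exact key
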